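/- Let 𝒞 be an admissible contravariantly finite full additive subcategory of an abelian category 𝒜. Then every 𝒞-acyclic complex in 𝒜 is acyclic. -/

import Mathlib

open CategoryTheory Limits

universe v u

variable {A : Type u} [Category.{v} A] [Abelian A]

/-- A complex `X` is `𝒞`-acyclic if `Hom_𝒜(C, X)` is an acyclic complex of abelian
groups for every `C ∈ 𝒞`. -/
def CAcyclic (𝒞 : Set A) (X : CochainComplex A ℤ) : Prop :=
  ∀ C ∈ 𝒞, ∀ i : ℤ,
    (((preadditiveCoyoneda.obj (Opposite.op C)).mapHomologicalComplex
      (ComplexShape.up ℤ)).obj X).ExactAt i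

/-- A chain map `f` is a `𝒞`-quasi-isomorphism if `Hom_𝒜(C, f)` is a quasi-isomorphism
for every `C ∈ 𝒞`. -/
def CQuasiIso (𝒞 : Set A) {X Y : CochainComplex A ℤ} (f : X ⟶ Y) : Prop :=
  ∀ C ∈ 𝒞, QuasiIso (((preadditiveCoyoneda.obj (Opposite.op C)).mapHomologicalComplex
      (ComplexShape.up ℤ)).map f)

/-- A cochain complex is bounded above. -/
def BoundedAbove (X : CochainComplex A ℤ) : Prop :=
  ∃ n : ℤ, ∀ i : ℤ, n < i → IsZero (X.X i)

/-- `f : C ⟶ M` is a right `𝒞`-approximation of `M`. -/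
def IsRightApprox (𝒞 : Set A) {C M : A} (f : C ⟶ M) : Prop :=
  C ∈ 𝒞 ∧ ∀ C' ∈ 𝒞, ∀ g : C' ⟶ M, ∃ h : C' ⟶ C, h ≫ f = g

/-- `𝒞` is contravariantly finite in `𝒜`: every object has a right `𝒞`-approximation. -/
def ContravariantlyFinite (𝒞 : Set A) : Prop :=
  ∀ M : A, ∃ (C : A) (f : C ⟶ M), IsRightApprox 𝒞 f

/-- `𝒞` is admissible: every right `𝒞`-approximation is an epimorphism. -/
def Admissible (𝒞 : Set A) : Prop :=
  ∀ ⦃C M : A⦄ (f : C ⟶ M), IsRightApprox 𝒞 f → Epi f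

/-- if `𝒞` is an admissible contravariantly finite subcategory of `𝒜`,
then every `𝒞`-acyclic complex is acyclic. -/
theorem stmt10 (𝒞 : Set A) (hcf : ContravariantlyFinite 𝒞) (hadm : Admissible 𝒞)
    (X : CochainComplex A ℤ) (hX : CAcyclic 𝒞 X) :
    ∀ i : ℤ, X.ExactAt i := by
  intro i
  -- take a right 𝒞-approximation of the kernel of `X.d i (i+1)`
  obtain ⟨C, f, hf⟩ := hcf (kernel (X.d i (i + 1)))
  haveI : Epi f := hadm f hf
  -- the cycle `f ≫ kernel.ι` lifts through `X.d (i-1) i` by 𝒞-acyclicity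
  have hex := (HomologicalComplex.exactAt_iff'
    (((preadditiveCoyoneda.obj (Opposite.op C)).mapHomologicalComplex
      (ComplexShape.up ℤ)).obj X) (i - 1) i (i + 1)
      (by simp) (by simp)).mp (hX C hf.1 i)
  rw [CategoryTheory.ShortComplex.ab_exact_iff] at hex
  obtain ⟨h, hh⟩ := hex (f ≫ kernel.ι (X.d i (i + 1))) (by
    show (f ≫ kernel.ι (X.d i (i + 1))) ≫ X.d i (i + 1) = 0
    simp)
  let h : C ⟶ X.X (i - 1) := h
  have hh' : h ≫ X.d (i - 1) i = f ≫ kernel.ι (X.d i (i + 1)) := hh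
  -- conclude exactness
  rw [HomologicalComplex.exactAt_iff' X (i - 1) i (i + 1) (by simp) (by simp),
    CategoryTheory.ShortComplex.exact_iff_epi_kernel_lift]
  have hfac : h ≫ kernel.lift (X.d i (i + 1)) (X.d (i - 1) i) (by simp) = f := by
    apply (cancel_mono (kernel.ι (X.d i (i + 1)))).mp
    simpa using hh'
  exact @epi_of_epi_fac _ _ _ _ _ _ _ _ (hadm f hf) hfac
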